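/- arXiv:2503.15751 — 2 statements merged into one kernel-verified Lean document; each statement's English description precedes it below -/
import Mathlib

section
/- The type-III 3-cocycle ω_III on (ℤ/2)³ is cohomologically nontrivial: there exists no function β : G × G → ℂˣ such that for all g,h,k ∈ G, ω_III(g,h,k) = β(h,k)·β(gh,k)⁻¹·β(g,hk)·β(g,h)⁻¹. -/
/-- The group `G = (ℤ/2)³`. -/
abbrev G0 : Type := ZMod 2 × ZMod 2 × ZMod 2

/-- The type-III 3-cocycle `ω_III(g₁,g₂,g₃) = (-1)^{a₁·b₂·c₃}`, valued in `ℂˣ`. -/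
noncomputable def ωIII (g₁ g₂ g₃ : G0) : ℂˣ :=
  (-1 : ℂˣ) ^ (g₁.1.val * g₂.2.1.val * g₃.2.2.val)

/-- `ω_III` is cohomologically nontrivial: it is not the coboundary of any
`ℂˣ`-valued 2-cochain `β`. -/
theorem ωIII_not_coboundary :
    ¬ ∃ β : G0 → G0 → ℂˣ,
      ∀ g h k : G0,
        ωIII g h k = β h k * (β (g + h) k)⁻¹ * β g (h + k) * (β g h)⁻¹ := by
  rintro ⟨β, hβ⟩
  set x : G0 := (1, 0, 0) with hx
  set y : G0 := (0, 1, 0) with hy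
  set z : G0 := (0, 0, 1) with hz
  set p : G0 := (1, 1, 0) with hp
  set q : G0 := (1, 0, 1) with hq
  set r : G0 := (0, 1, 1) with hr
  have exy : x + y = p := by decide
  have eyx : y + x = p := by decide
  have exz : x + z = q := by decide
  have ezx : z + x = q := by decide
  have eyz : y + z = r := by decide
  have ezy : z + y = r := by decide
  have h1 := hβ x y z
  have h2 := hβ y z x
  have h3 := hβ z x y
  have h4 := hβ x z y
  have h5 := hβ y x z
  have h6 := hβ z y x
  rw [exy, eyz] at h1
  rw [eyz, ezx] at h2
  rw [ezx, exy] at h3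
  rw [exz, ezy] at h4
  rw [eyx, exz] at h5
  rw [ezy, eyx] at h6
  have v1 : (1 : ZMod 2).val = 1 := rfl
  have w1 : ωIII x y z = -1 := by norm_num [ωIII, hx, hy, hz, v1]
  have w2 : ωIII y z x = 1 := by norm_num [ωIII, hx, hy, hz]
  have w3 : ωIII z x y = 1 := by norm_num [ωIII, hx, hy, hz]
  have w4 : ωIII x z y = 1 := by norm_num [ωIII, hx, hy, hz]
  have w5 : ωIII y x z = 1 := by norm_num [ωIII, hx, hy, hz]
  have w6 : ωIII z y x = 1 := by norm_num [ωIII, hx, hy, hz]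
  rw [w1] at h1; rw [w2] at h2; rw [w3] at h3
  rw [w4] at h4; rw [w5] at h5; rw [w6] at h6
  have key : (β y z * (β p z)⁻¹ * β x r * (β x y)⁻¹) *
      (β z x * (β r x)⁻¹ * β y q * (β y z)⁻¹) *
      (β x y * (β q y)⁻¹ * β z p * (β z x)⁻¹) =
      (β z y * (β q y)⁻¹ * β x r * (β x z)⁻¹) *
      (β x z * (β p z)⁻¹ * β y q * (β y x)⁻¹) *
      (β y x * (β r x)⁻¹ * β z p * (β z y)⁻¹) := by
    apply Units.ext
    push_cast
    field_simp
  have contra : (-1 : ℂˣ) = 1 := by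
    calc (-1 : ℂˣ) = (β y z * (β p z)⁻¹ * β x r * (β x y)⁻¹) *
        (β z x * (β r x)⁻¹ * β y q * (β y z)⁻¹) *
        (β x y * (β q y)⁻¹ * β z p * (β z x)⁻¹) := by
          rw [← h3, ← h2, ← h1]; simp
    _ = (β z y * (β q y)⁻¹ * β x r * (β x z)⁻¹) *
        (β x z * (β p z)⁻¹ * β y q * (β y x)⁻¹) *
        (β y x * (β r x)⁻¹ * β z p * (β z y)⁻¹) := key
    _ = 1 := by rw [← h6, ← h5, ← h4]; simp
  have : ((-1 : ℂˣ) : ℂ) = ((1 : ℂˣ) : ℂ) := by rw [contra]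
  norm_num at this
end

section
/- Let H = {(0,0,0),(1,1,0),(1,0,1),(0,1,1)} ⊆ (ℤ/2)³ be the subgroup generated by (1,1,0) and (1,0,1). Then the restriction of the type-III cocycle ω_III to H is a coboundary: there exists β : H × H → ℂˣ (which may be taken with values in the 4th roots of unity) such that ω_III(g,h,k) = β(h,k)·β(gh,k)⁻¹·β(g,hk)·β(g,h)⁻¹ for all g,h,k ∈ H. -/
/-- The subgroup `H = {(0,0,0),(1,1,0),(1,0,1),(0,1,1)} ⊆ (ℤ/2)³`
generated by `(1,1,0)` and `(1,0,1)`. -/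
def Hset : Set G0 := {(0, 0, 0), (1, 1, 0), (1, 0, 1), (0, 1, 1)}

/-- The imaginary unit `i` as a unit of `ℂ`. -/
noncomputable def Ju : ℂˣ := ⟨Complex.I, -Complex.I, by simp, by simp⟩

/-- Exponent table for the trivializing 2-cochain `β(g,h) = i^{expo g h}`. -/
def expo (g h : G0) : ℕ :=
  if g = (1,1,0) ∧ h = (0,1,1) then 2
  else if g = (1,0,1) ∧ h = (1,1,0) then 1
  else if g = (1,0,1) ∧ h = (0,1,1) then 3
  else if g = (0,1,1) ∧ h = (1,1,0) then 3
  else if g = (0,1,1) ∧ h = (0,1,1) then 3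
  else 0

lemma Ju4 : Ju ^ 4 = 1 := by
  ext
  show Complex.I ^ 4 = 1
  rw [show (4:ℕ) = 2*2 from rfl, pow_mul, Complex.I_sq]
  norm_num

lemma Ju_mod (m : ℕ) : Ju ^ m = Ju ^ (m % 4) := by
  conv_lhs => rw [← Nat.div_add_mod m 4]
  rw [pow_add, pow_mul, Ju4, one_pow, one_mul]

lemma Ju_inv (m : ℕ) : (Ju ^ m)⁻¹ = Ju ^ (3 * m) := by
  apply inv_eq_of_mul_eq_one_right
  rw [← pow_add, show m + 3 * m = 4 * m from by ring, pow_mul, Ju4, one_pow]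

lemma neg_one_eq : (-1 : ℂˣ) = Ju ^ 2 := by
  ext; simp [Ju, sq, Complex.I_mul_I]

lemma key (e a b c d : ℕ) (h : (2 * e) % 4 = (a + 3 * b + c + 3 * d) % 4) :
    (-1 : ℂˣ) ^ e = Ju ^ a * (Ju ^ b)⁻¹ * (Ju ^ c) * (Ju ^ d)⁻¹ := by
  rw [neg_one_eq, ← pow_mul, Ju_inv b, Ju_inv d, ← pow_add, ← pow_add, ← pow_add,
    Ju_mod (2 * e), Ju_mod (a + 3 * b + c + 3 * d), h]

/-- The restriction of `ω_III` to `H` is a coboundary, with a trivializing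
2-cochain taking values in 4th roots of unity. -/
theorem ωIII_restricted_coboundary :
    ∃ β : G0 → G0 → ℂˣ,
      (∀ g h : G0, (β g h) ^ 4 = 1) ∧
      ∀ g ∈ Hset, ∀ h ∈ Hset, ∀ k ∈ Hset,
        ωIII g h k = β h k * (β (g + h) k)⁻¹ * β g (h + k) * (β g h)⁻¹ := by
  refine ⟨fun g h => Ju ^ (expo g h), ?_, ?_⟩
  · intro g h
    rw [← pow_mul, mul_comm, pow_mul, Ju4, one_pow]
  · intro g hg h hh k hk
    simp only [ωIII]
    rcases hg with rfl|rfl|rfl|rfl <;> rcases hh with rfl|rfl|rfl|rfl <;>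
      rcases hk with rfl|rfl|rfl|rfl <;>
      exact key _ _ _ _ _ (by decide)
end
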